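/- Let K be a regular incidence complex of rank n ≥ 1 with flag-transitive subgroup Γ ≤ Aut(K), base flag Φ, and distinguished generating subgroups R_{-1},...,R_n. For I ⊆ {-1,0,...,n} let Γ_I := ⟨R_i : i ∈ I⟩ (with Γ_∅ := R_{-1}). Then for all I, J ⊆ {-1,0,...,n}: Γ_I ∩ Γ_J = Γ_{I∩J}. -/

import Mathlib

open Set Pointwise

/-- `Φ` is a flag of the subset `s` of the poset `α`: a chain contained in `s`
that is maximal among chains contained in `s`. -/
def IsFlagOf {α : Type*} [PartialOrder α] (s Φ : Set α) : Prop :=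
  Φ ⊆ s ∧ IsChain (· ≤ ·) Φ ∧
    ∀ Ψ : Set α, Ψ ⊆ s → IsChain (· ≤ ·) Ψ → Φ ⊆ Ψ → Ψ = Φ

/-- Two flags are adjacent if each differs from the other in exactly one face. -/
def FlagAdj {α : Type*} [PartialOrder α] (Φ Ψ : Set α) : Prop :=
  (Φ \ Ψ).ncard = 1 ∧ (Ψ \ Φ).ncard = 1

/-- The set `s` is flag-connected: any two flags of `s` are joined by a sequence
of successively adjacent flags of `s`. -/
def FlagConnIn {α : Type*} [PartialOrder α] (s : Set α) : Prop :=
  ∀ Φ Ψ : Set α, IsFlagOf s Φ → IsFlagOf s Ψ →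
    Relation.ReflTransGen
      (fun A B => IsFlagOf s A ∧ IsFlagOf s B ∧ FlagAdj A B) Φ Ψ

/-- The section between `F` and `G` is connected: any two of its proper faces are
joined by a finite sequence of successively incident proper faces of the section. -/
def ConnIn {α : Type*} [PartialOrder α] (F G : α) : Prop :=
  ∀ H K : α, F < H → H < G → F < K → K < G →
    Relation.ReflTransGen
      (fun a b => F < a ∧ a < G ∧ F < b ∧ b < G ∧ (a ≤ b ∨ b ≤ a)) H K

/-- An incidence complex of rank `n`: a bounded ranked poset (rank function `rk`
with range `{-1,…,n}`, strictly monotone, all flags having `n+2` elements hitting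
every rank), strongly connected (I3), and with at least two `i`-faces between any
incident pair of faces of ranks `i-1` and `i+1` (I4). -/
structure IncComplex (α : Type*) [PartialOrder α] [BoundedOrder α]
    (n : ℤ) (rk : α → ℤ) : Prop where
  rk_bot : rk (⊥ : α) = -1
  rk_top : rk (⊤ : α) = n
  rk_strictMono : ∀ a b : α, a < b → rk a < rk b
  chain_flag : ∀ c : Set α, IsChain (· ≤ ·) c →
    ∃ Φ : Set α, c ⊆ Φ ∧ IsFlagOf Set.univ Φ ∧ Φ.ncard = (n + 2).toNat
  flag_rk : ∀ Φ : Set α, IsFlagOf Set.univ Φ →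
    ∀ i ∈ Set.Icc (-1 : ℤ) n, ∃ a ∈ Φ, rk a = i
  strong_conn : ∀ F G : α, F ≤ G → 2 ≤ rk G - rk F - 1 → ConnIn F G
  two_between : ∀ F G : α, F < G → rk G = rk F + 2 →
    ∃ H H' : α, H ≠ H' ∧ F < H ∧ H < G ∧ F < H' ∧ H' < G

/-- A complex is regular if its automorphism group acts transitively on flags. -/
def IsRegularIC (α : Type*) [PartialOrder α] : Prop :=
  ∀ Φ Ψ : Set α, IsFlagOf Set.univ Φ → IsFlagOf Set.univ Ψ →
    ∃ g : α ≃o α, ⇑g '' Φ = Ψ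

/-- `Γ` is a flag-transitive subgroup of the automorphism group. -/
def FlagTrans {α : Type*} [PartialOrder α] (Γ : Subgroup (α ≃o α)) : Prop :=
  ∀ Φ Ψ : Set α, IsFlagOf Set.univ Φ → IsFlagOf Set.univ Ψ →
    ∃ g ∈ Γ, ⇑g '' Φ = Ψ

/-- The distinguished generating subset `R_i`: the stabilizer in `Γ` of
`Φ \ {F_i}`, where `F` enumerates the base flag by rank. -/
def Rset {α : Type*} [PartialOrder α] (Γ : Subgroup (α ≃o α)) (F : ℤ → α)
    (n i : ℤ) : Set (α ≃o α) :=
  {g | g ∈ Γ ∧ ∀ j ∈ Set.Icc (-1 : ℤ) n, j ≠ i → g (F j) = F j}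

/-- The distinguished subgroup `Γ_I = ⟨R_i : i ∈ I⟩` (with `Γ_∅ = R_{-1}`). -/
def GammaI {α : Type*} [PartialOrder α] (Γ : Subgroup (α ≃o α)) (F : ℤ → α)
    (n : ℤ) (I : Set ℤ) : Subgroup (α ≃o α) :=
  Subgroup.closure (Rset Γ F n (-1) ∪ ⋃ i ∈ I, Rset Γ F n i)

section Base
variable {α : Type*} [PartialOrder α] [BoundedOrder α] {n : ℤ} {rk : α → ℤ}

open Classical in
/-- The unique element of rank `i` in a set (when it exists). -/
noncomputable def felem (rk : α → ℤ) (Φ : Set α) (i : ℤ) : α :=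
  if h : ∃ a, a ∈ Φ ∧ rk a = i then h.choose else ⊥

lemma chain_lt (hK : IncComplex α n rk) {s : Set α} (hc : IsChain (· ≤ ·) s)
    {a b : α} (ha : a ∈ s) (hb : b ∈ s) (h : rk a < rk b) : a < b := by
  rcases eq_or_ne a b with rfl | hne
  · omega
  rcases hc ha hb hne with h1 | h1
  · exact lt_of_le_of_ne h1 hne
  · exact absurd (hK.rk_strictMono _ _ (lt_of_le_of_ne h1 hne.symm)) (by omega)

lemma chain_rk_inj (hK : IncComplex α n rk) {s : Set α} (hc : IsChain (· ≤ ·) s)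
    {a b : α} (ha : a ∈ s) (hb : b ∈ s) (h : rk a = rk b) : a = b := by
  by_contra hne
  rcases hc ha hb hne with h1 | h1
  · exact absurd (hK.rk_strictMono _ _ (lt_of_le_of_ne h1 hne)) (by omega)
  · exact absurd (hK.rk_strictMono _ _ (lt_of_le_of_ne h1 (Ne.symm hne))) (by omega)

lemma Icc_ncard : (Set.Icc (-1 : ℤ) n).ncard = (n + 2).toNat := by
  rw [← Finset.coe_Icc, Set.ncard_coe_finset, Int.card_Icc]
  congr 1; ring

lemma flag_ncard (hK : IncComplex α n rk) {Φ : Set α} (hΦ : IsFlagOf Set.univ Φ) :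
    Φ.ncard = (n + 2).toNat := by
  obtain ⟨Ψ, hsub, hΨ, hcard⟩ := hK.chain_flag Φ hΦ.2.1
  rwa [← hΦ.2.2 Ψ (subset_univ _) hΨ.2.1 hsub]

lemma neg_one_le_n (hK : IncComplex α n rk) : (-1 : ℤ) ≤ n := by
  rcases eq_or_lt_of_le (bot_le : (⊥ : α) ≤ ⊤) with h | h
  · rw [← hK.rk_bot, h, hK.rk_top]
  · have := hK.rk_strictMono _ _ h
    rw [hK.rk_bot, hK.rk_top] at this; omega

lemma flag_finite (hK : IncComplex α n rk) {Φ : Set α} (hΦ : IsFlagOf Set.univ Φ) :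
    Φ.Finite := by
  by_contra h
  have h1 := flag_ncard hK hΦ
  rw [Set.Infinite.ncard h] at h1
  have := neg_one_le_n hK
  omega

lemma felem_spec (hK : IncComplex α n rk) {Φ : Set α} (hΦ : IsFlagOf Set.univ Φ)
    {i : ℤ} (hi : i ∈ Set.Icc (-1 : ℤ) n) :
    felem rk Φ i ∈ Φ ∧ rk (felem rk Φ i) = i := by
  obtain ⟨a, ha, hrk⟩ := hK.flag_rk Φ hΦ i hi
  have h : ∃ a, a ∈ Φ ∧ rk a = i := ⟨a, ha, hrk⟩
  rw [felem]; rw [dif_pos h]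
  exact h.choose_spec

lemma felem_eq (hK : IncComplex α n rk) {Φ : Set α} (hΦ : IsFlagOf Set.univ Φ)
    {a : α} (ha : a ∈ Φ) : felem rk Φ (rk a) = a := by
  have h : ∃ b, b ∈ Φ ∧ rk b = rk a := ⟨a, ha, rfl⟩
  rw [felem]; rw [dif_pos h]
  exact chain_rk_inj hK hΦ.2.1 h.choose_spec.1 ha h.choose_spec.2

/-- every element of a flag is a `felem` at a rank in `Icc`. -/
lemma flag_eq_image (hK : IncComplex α n rk) {Φ : Set α} (hΦ : IsFlagOf Set.univ Φ) :
    felem rk Φ '' Set.Icc (-1 : ℤ) n = Φ := by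
  apply Set.eq_of_subset_of_ncard_le
  · rintro x ⟨i, hi, rfl⟩; exact (felem_spec hK hΦ hi).1
  · rw [flag_ncard hK hΦ, ← Icc_ncard (n := n)]
    rw [Set.ncard_image_of_injOn]
    intro i hi j hj hij
    rw [← (felem_spec hK hΦ hi).2, ← (felem_spec hK hΦ hj).2, hij]
  · exact flag_finite hK hΦ

lemma rk_mem_Icc (hK : IncComplex α n rk) {Φ : Set α} (hΦ : IsFlagOf Set.univ Φ)
    {a : α} (ha : a ∈ Φ) : rk a ∈ Set.Icc (-1 : ℤ) n := by
  rw [← flag_eq_image hK hΦ] at ha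
  obtain ⟨i, hi, rfl⟩ := ha
  rwa [(felem_spec hK hΦ hi).2]

end Base

section Mid
variable {α : Type*} [PartialOrder α] [BoundedOrder α] {n : ℤ} {rk : α → ℤ}

lemma felem_unique (hK : IncComplex α n rk) {Φ : Set α} (hΦ : IsFlagOf Set.univ Φ)
    {a : α} {i : ℤ} (ha : a ∈ Φ) (hr : rk a = i) : a = felem rk Φ i := by
  rw [← hr, felem_eq hK hΦ ha]

lemma eq_bot_of_rk (hK : IncComplex α n rk) {a : α} (h : rk a = -1) : a = ⊥ := by
  rcases eq_or_lt_of_le (bot_le : (⊥ : α) ≤ a) with h1 | h1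
  · exact h1.symm
  · have := hK.rk_strictMono _ _ h1; rw [hK.rk_bot] at this; omega

lemma eq_top_of_rk (hK : IncComplex α n rk) {a : α} (h : rk a = n) : a = ⊤ := by
  rcases eq_or_lt_of_le (le_top : a ≤ (⊤ : α)) with h1 | h1
  · exact h1
  · have := hK.rk_strictMono _ _ h1; rw [hK.rk_top] at this; omega

lemma bot_mem_flag (hK : IncComplex α n rk) {Φ : Set α} (hΦ : IsFlagOf Set.univ Φ) :
    (⊥ : α) ∈ Φ := by
  have h := felem_spec hK hΦ (i := -1) (by simp [neg_one_le_n hK])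
  exact (eq_bot_of_rk hK h.2) ▸ h.1
 
lemma top_mem_flag (hK : IncComplex α n rk) {Φ : Set α} (hΦ : IsFlagOf Set.univ Φ) :
    (⊤ : α) ∈ Φ := by
  have h := felem_spec hK hΦ (i := n) (by simp [neg_one_le_n hK])
  exact (eq_top_of_rk hK h.2) ▸ h.1

/-- A chain hitting every rank is a flag. -/
lemma isFlag_of_ranks (hK : IncComplex α n rk) {s : Set α} (hc : IsChain (· ≤ ·) s)
    (hr : ∀ i ∈ Set.Icc (-1 : ℤ) n, ∃ a ∈ s, rk a = i) : IsFlagOf Set.univ s := by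
  refine ⟨subset_univ _, hc, fun Ψ _ hΨc hsub => ?_⟩
  obtain ⟨Φ', hsub', hΦ', hcard'⟩ := hK.chain_flag Ψ hΨc
  have hs : s ⊆ Φ' := hsub.trans hsub'
  have : s = Φ' := by
    apply Set.eq_of_subset_of_ncard_le hs _ (flag_finite hK hΦ')
    rw [hcard', ← Icc_ncard (n := n)]
    choose f hf1 hf2 using hr
    have : (fun i => if h : i ∈ Set.Icc (-1:ℤ) n then f i h else ⊥) '' Set.Icc (-1:ℤ) n ⊆ s := by
      rintro x ⟨i, hi, rfl⟩; simp only [dif_pos hi]; exact hf1 i hi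
    calc (Set.Icc (-1:ℤ) n).ncard
        = ((fun i => if h : i ∈ Set.Icc (-1:ℤ) n then f i h else ⊥) '' Set.Icc (-1:ℤ) n).ncard := by
          rw [Set.ncard_image_of_injOn]
          intro i hi j hj hij
          simp only [dif_pos hi, dif_pos hj] at hij
          rw [← hf2 i hi, ← hf2 j hj, hij]
      _ ≤ s.ncard := Set.ncard_le_ncard this ((flag_finite hK hΦ').subset hs)
  have h2 : Ψ ⊆ Φ' := hsub'
  rw [this] at hsub ⊢
  exact le_antisymm h2 hsub

/-- Two flags agreeing in all their rank-elements are equal. -/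
lemma flag_eq_of_felem (hK : IncComplex α n rk) {A B : Set α}
    (hA : IsFlagOf Set.univ A) (hB : IsFlagOf Set.univ B)
    (h : ∀ j ∈ Set.Icc (-1 : ℤ) n, felem rk A j = felem rk B j) : A = B := by
  rw [← flag_eq_image hK hA, ← flag_eq_image hK hB]
  apply Set.image_congr h

/-- A strictly monotone self-map of `Icc (-1) n` in `ℤ` is the identity. -/
lemma strictMonoOn_Icc_id {f : ℤ → ℤ}
    (hmono : ∀ i ∈ Set.Icc (-1 : ℤ) n, ∀ j ∈ Set.Icc (-1 : ℤ) n, i < j → f i < f j)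
    (hmaps : ∀ i ∈ Set.Icc (-1 : ℤ) n, f i ∈ Set.Icc (-1 : ℤ) n) :
    ∀ i ∈ Set.Icc (-1 : ℤ) n, f i = i := by
  have key : ∀ i, -1 ≤ i → ∀ j, i ≤ j → j ≤ n → f j - f i ≥ j - i := by
    intro i hi
    refine Int.le_induction ?_ ?_
    · omega
    · intro m hm ih hmn
      have h1 := hmono m ⟨by omega, by omega⟩ (m+1) ⟨by omega, by omega⟩ (by omega)
      have := ih (by omega)
      omega
  intro i hi
  simp only [Set.mem_Icc] at hi
  have h1 := key (-1) (by omega) i hi.1 hi.2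
  have h2 := key i hi.1 n hi.2 le_rfl
  have h3 := hmaps (-1) (by simp; omega)
  have h4 := hmaps n (by simp; omega)
  simp only [Set.mem_Icc] at h3 h4
  omega

lemma orderIso_image_flag (hK : IncComplex α n rk) (g : α ≃o α) {Φ : Set α}
    (hΦ : IsFlagOf Set.univ Φ) : IsFlagOf Set.univ (⇑g '' Φ) := by
  refine ⟨subset_univ _, ?_, ?_⟩
  · rintro _ ⟨a, ha, rfl⟩ _ ⟨b, hb, rfl⟩ hne
    have hab : a ≠ b := fun h => hne (by rw [h])
    rcases hΦ.2.1 ha hb hab with h | h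
    · exact Or.inl (g.le_iff_le.mpr h)
    · exact Or.inr (g.le_iff_le.mpr h)
  · intro Ψ _ hΨc hsub
    have h1 : Φ ⊆ ⇑g.symm '' Ψ := by
      intro a ha
      exact ⟨g a, hsub ⟨a, ha, rfl⟩, g.symm_apply_apply a⟩
    have h2 : IsChain (· ≤ ·) (⇑g.symm '' Ψ) := by
      rintro _ ⟨a, ha, rfl⟩ _ ⟨b, hb, rfl⟩ hne
      have hab : a ≠ b := fun h => hne (by rw [h])
      rcases hΨc ha hb hab with h | h
      · exact Or.inl (g.symm.le_iff_le.mpr h)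
      · exact Or.inr (g.symm.le_iff_le.mpr h)
    have h3 := hΦ.2.2 _ (subset_univ _) h2 h1
    calc Ψ = ⇑g '' (⇑g.symm '' Ψ) := by
            rw [Set.image_image]; simp
      _ = ⇑g '' Φ := by rw [h3]

/-- An order iso mapping one flag to another aligns the rank elements. -/
lemma orderIso_felem (hK : IncComplex α n rk) (g : α ≃o α) {Φ Ψ : Set α}
    (hΦ : IsFlagOf Set.univ Φ) (hΨ : IsFlagOf Set.univ Ψ) (him : ⇑g '' Φ = Ψ)
    {j : ℤ} (hj : j ∈ Set.Icc (-1 : ℤ) n) : g (felem rk Φ j) = felem rk Ψ j := by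
  set f : ℤ → ℤ := fun i => rk (g (felem rk Φ i)) with hf
  have hmem : ∀ i ∈ Set.Icc (-1:ℤ) n, g (felem rk Φ i) ∈ Ψ := by
    intro i hi
    rw [← him]
    exact ⟨_, (felem_spec hK hΦ hi).1, rfl⟩
  have hid : ∀ i ∈ Set.Icc (-1:ℤ) n, f i = i := by
    apply strictMonoOn_Icc_id
    · intro i hi j hj hij
      apply hK.rk_strictMono
      apply g.strictMono
      apply chain_lt hK hΦ.2.1 (felem_spec hK hΦ hi).1 (felem_spec hK hΦ hj).1
      rw [(felem_spec hK hΦ hi).2, (felem_spec hK hΦ hj).2]; exact hij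
    · intro i hi
      exact rk_mem_Icc hK hΨ (hmem i hi)
  exact felem_unique hK hΨ (hmem j hj) (hid j hj)

end Mid

section Conn
variable {α : Type*} [PartialOrder α] [BoundedOrder α] {n : ℤ} {rk : α → ℤ}

/-- One elementary exchange between flags containing `C`: they agree at all
ranks except possibly `i`. -/
def StepC (rk : α → ℤ) (n : ℤ) (C A B : Set α) : Prop :=
  IsFlagOf Set.univ A ∧ IsFlagOf Set.univ B ∧ C ⊆ A ∧ C ⊆ B ∧
    ∃ i ∈ Set.Icc (-1 : ℤ) n, ∀ j ∈ Set.Icc (-1 : ℤ) n, j ≠ i →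
      felem rk A j = felem rk B j

lemma stepC_mono {C C' A B : Set α} (h : C ⊆ C') (hs : StepC rk n C' A B) :
    StepC rk n C A B :=
  ⟨hs.1, hs.2.1, h.trans hs.2.2.1, h.trans hs.2.2.2.1, hs.2.2.2.2⟩

/-- The connectivity lemma: any two flags containing a chain `C` (with `⊥, ⊤ ∈ C`)
are joined by elementary exchanges through flags containing `C`. -/
lemma conn (hK : IncComplex α n rk) : ∀ d : ℕ, ∀ C Φ Ψ : Set α,
    IsChain (· ≤ ·) C → (⊥ : α) ∈ C → (⊤ : α) ∈ C →
    IsFlagOf Set.univ Φ → IsFlagOf Set.univ Ψ → C ⊆ Φ → C ⊆ Ψ →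
    (n + 2).toNat ≤ C.ncard + d →
    Relation.ReflTransGen (StepC rk n C) Φ Ψ := by
  intro d
  induction d with
  | zero =>
    intro C Φ Ψ hC _ _ hΦ hΨ hCΦ hCΨ hcard
    have h1 : Φ = C := (Set.eq_of_subset_of_ncard_le hCΦ
      (by rw [flag_ncard hK hΦ]; omega) (flag_finite hK hΦ)).symm
    have h2 : Ψ = C := (Set.eq_of_subset_of_ncard_le hCΨ
      (by rw [flag_ncard hK hΨ]; omega) (flag_finite hK hΨ)).symm
    rw [h1, h2]
  | succ d ih =>
    intro C Φ Ψ hC hbot htop hΦ hΨ hCΦ hCΨ hcard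
    by_cases hall : ∀ i ∈ Set.Icc (-1 : ℤ) n, ∃ c ∈ C, rk c = i
    · have hCflag := isFlag_of_ranks hK hC hall
      rw [hCflag.2.2 Φ (subset_univ _) hΦ.2.1 hCΦ, hCflag.2.2 Ψ (subset_univ _) hΨ.2.1 hCΨ]
    push_neg at hall
    obtain ⟨i, hi, hmiss⟩ := hall
    have hCfin : C.Finite := (flag_finite hK hΦ).subset hCΦ
    -- find the gap elements a < b around the missing rank i
    have hSa : {c ∈ C | rk c < i}.Nonempty := ⟨⊥, hbot, by
      simp only [hK.rk_bot]
      rcases lt_or_eq_of_le hi.1 with h | h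
      · omega
      · exact absurd (h ▸ hK.rk_bot) (by intro hc; exact hmiss ⊥ hbot (by omega))⟩
    have hSb : {c ∈ C | i < rk c}.Nonempty := ⟨⊤, htop, by
      simp only [hK.rk_top]
      rcases lt_or_eq_of_le hi.2 with h | h
      · omega
      · exact absurd (h ▸ hK.rk_top) (by intro hc; exact hmiss ⊤ htop (by omega))⟩
    obtain ⟨a, ⟨haC, hai⟩, hamax⟩ := Set.Finite.exists_maximalFor rk _
      (hCfin.subset (Set.sep_subset _ _)) hSa
    obtain ⟨b, ⟨hbC, hbi⟩, hbmin⟩ := Set.Finite.exists_minimalFor rk _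
      (hCfin.subset (Set.sep_subset _ _)) hSb
    -- every element of C has rank ≤ rk a or ≥ rk b
    have hgapC : ∀ c ∈ C, rk c ≤ rk a ∨ rk b ≤ rk c := by
      intro c hc
      rcases lt_trichotomy (rk c) i with h | h | h
      · left
        by_contra hac
        exact absurd (hamax ⟨hc, h⟩ (by omega)) (by omega)
      · exact absurd h (hmiss c hc)
      · right
        by_contra hbc
        exact absurd (hbmin ⟨hc, h⟩ (by omega)) (by omega)
    have hab : a < b := chain_lt hK hC haC hbC (by omega)
    have hrka : rk a ∈ Set.Icc (-1:ℤ) n := rk_mem_Icc hK hΦ (hCΦ haC)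
    have hrkb : rk b ∈ Set.Icc (-1:ℤ) n := rk_mem_Icc hK hΦ (hCΦ hbC)
    -- any x strictly between a and b is comparable with everything in C, and not in C
    have hcomp : ∀ x, a < x → x < b → ∀ c ∈ C, c ≤ x ∨ x ≤ c := by
      intro x hax hxb c hc
      rcases hgapC c hc with h | h
      · left
        calc c ≤ a := by
              rcases eq_or_ne c a with rfl | hne
              · rfl
              · rcases lt_or_eq_of_le h with h' | h'
                · exact le_of_lt (chain_lt hK hC hc haC h')
                · exact le_of_eq (chain_rk_inj hK hC hc haC h')
          _ ≤ x := le_of_lt hax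
      · right
        calc x ≤ b := le_of_lt hxb
          _ ≤ c := by
              rcases eq_or_ne b c with rfl | hne
              · rfl
              · rcases lt_or_eq_of_le h with h' | h'
                · exact le_of_lt (chain_lt hK hC hbC hc h')
                · exact le_of_eq (chain_rk_inj hK hC hbC hc h')
    have hnotin : ∀ x, a < x → x < b → x ∉ C := by
      intro x hax hxb hxC
      have h1 := hK.rk_strictMono _ _ hax
      have h2 := hK.rk_strictMono _ _ hxb
      rcases hgapC x hxC with h | h <;> omega
    have hchainins : ∀ x, a < x → x < b → IsChain (· ≤ ·) (insert x C) := by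
      intro x hax hxb
      exact hC.insert (fun c hc _ => (hcomp x hax hxb c hc).symm)
    have hcardins : ∀ x, a < x → x < b → (n+2).toNat ≤ (insert x C).ncard + d := by
      intro x hax hxb
      rw [Set.ncard_insert_of_notMem (hnotin x hax hxb) hCfin]
      omega
    have hgap2 : rk a + 2 ≤ rk b := by omega
    rcases eq_or_lt_of_le hgap2 with hg2 | hg3
    · -- gap of exactly 2: i = rk a + 1, exchange the middle element
      have hieq : i = rk a + 1 := by omega
      have hxspec := felem_spec hK hΨ hi
      set x := felem rk Ψ i with hx
      have hax : a < x := chain_lt hK hΨ.2.1 (hCΨ haC) hxspec.1 (by omega)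
      have hxb : x < b := chain_lt hK hΨ.2.1 hxspec.1 (hCΨ hbC) (by omega)
      have hC2chain := hchainins x hax hxb
      have hC2Ψ : insert x C ⊆ Ψ := Set.insert_subset hxspec.1 hCΨ
      by_cases hxΦ : x ∈ Φ
      · exact (ih (insert x C) Φ Ψ hC2chain (Set.mem_insert_of_mem _ hbot)
          (Set.mem_insert_of_mem _ htop) hΦ hΨ (Set.insert_subset hxΦ hCΦ) hC2Ψ
          (hcardins x hax hxb)).lift id
          (fun A B h => stepC_mono (Set.subset_insert _ _) h)
      · -- build the exchanged flag Φ'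
        have hyspec := felem_spec hK hΦ hi
        set y := felem rk Φ i with hy
        set Φ' := insert x (Φ \ {y}) with hΦ'def
        have hΦ'chain : IsChain (· ≤ ·) Φ' := by
          apply (hΦ.2.1.mono (Set.diff_subset)).insert
          intro c hc _
          have hcΦ : c ∈ Φ := hc.1
          have hrkc : rk c ≠ i := by
            intro h
            exact hc.2 (felem_unique hK hΦ hcΦ h ▸ rfl)
          rcases lt_or_gt_of_ne hrkc with h | h
          · right
            calc c ≤ a := by
                  rcases eq_or_lt_of_le (show rk c ≤ rk a by omega) with h' | h'
                  · exact le_of_eq (chain_rk_inj hK hΦ.2.1 hcΦ (hCΦ haC) h')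
                  · exact le_of_lt (chain_lt hK hΦ.2.1 hcΦ (hCΦ haC) h')
              _ ≤ x := le_of_lt hax
          · left
            calc x ≤ b := le_of_lt hxb
              _ ≤ c := by
                  rcases eq_or_lt_of_le (show rk b ≤ rk c by omega) with h' | h'
                  · exact le_of_eq (chain_rk_inj hK hΦ.2.1 (hCΦ hbC) hcΦ h')
                  · exact le_of_lt (chain_lt hK hΦ.2.1 (hCΦ hbC) hcΦ h')
        have hΦ'flag : IsFlagOf Set.univ Φ' := by
          apply isFlag_of_ranks hK hΦ'chain
          intro j hj
          rcases eq_or_ne j i with rfl | hne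
          · exact ⟨x, Set.mem_insert _ _, hxspec.2⟩
          · refine ⟨felem rk Φ j, Set.mem_insert_of_mem _ ⟨(felem_spec hK hΦ hj).1, ?_⟩,
              (felem_spec hK hΦ hj).2⟩
            simp only [Set.mem_singleton_iff]
            intro h
            exact hne (by rw [← (felem_spec hK hΦ hj).2, h, hyspec.2])
        have hCΦ' : C ⊆ Φ' := by
          intro c hc
          refine Set.mem_insert_of_mem _ ⟨hCΦ hc, ?_⟩
          simp only [Set.mem_singleton_iff]
          intro h
          exact hmiss c hc (by rw [h, hyspec.2])
        have hfe : ∀ j ∈ Set.Icc (-1:ℤ) n, j ≠ i → felem rk Φ j = felem rk Φ' j := by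
          intro j hj hne
          apply felem_unique hK hΦ'flag
          · refine Set.mem_insert_of_mem _ ⟨(felem_spec hK hΦ hj).1, ?_⟩
            simp only [Set.mem_singleton_iff]
            intro h
            exact hne (by rw [← (felem_spec hK hΦ hj).2, h, hyspec.2])
          · exact (felem_spec hK hΦ hj).2
        have hstep : StepC rk n C Φ Φ' := ⟨hΦ, hΦ'flag, hCΦ, hCΦ', i, hi, hfe⟩
        refine Relation.ReflTransGen.head hstep ?_
        exact (ih (insert x C) Φ' Ψ hC2chain (Set.mem_insert_of_mem _ hbot)
          (Set.mem_insert_of_mem _ htop) hΦ'flag hΨ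
          (Set.insert_subset (Set.mem_insert _ _) hCΦ') hC2Ψ
          (hcardins x hax hxb)).lift id
          (fun A B h => stepC_mono (Set.subset_insert _ _) h)
    · -- gap ≥ 3: use strong connectivity of the section (a,b)
      have hj1 : rk a + 1 ∈ Set.Icc (-1:ℤ) n := by
        simp only [Set.mem_Icc] at *
        omega
      have hHspec := felem_spec hK hΦ hj1
      have hKspec := felem_spec hK hΨ hj1
      set H := felem rk Φ (rk a + 1) with hH
      set K := felem rk Ψ (rk a + 1) with hKdef
      have haH : a < H := chain_lt hK hΦ.2.1 (hCΦ haC) hHspec.1 (by omega)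
      have hHb : H < b := chain_lt hK hΦ.2.1 hHspec.1 (hCΦ hbC) (by omega)
      have haK : a < K := chain_lt hK hΨ.2.1 (hCΨ haC) hKspec.1 (by omega)
      have hKb : K < b := chain_lt hK hΨ.2.1 hKspec.1 (hCΨ hbC) (by omega)
      have hpath := hK.strong_conn a b (le_of_lt hab) (by omega) H K haH hHb haK hKb
      -- prove the claim by head induction on the path
      have claim : ∀ x, Relation.ReflTransGen
          (fun u v => a < u ∧ u < b ∧ a < v ∧ v < b ∧ (u ≤ v ∨ v ≤ u)) x K →
          a < x → x < b →
          ∀ Φ₁ : Set α, IsFlagOf Set.univ Φ₁ → C ⊆ Φ₁ → x ∈ Φ₁ →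
          Relation.ReflTransGen (StepC rk n C) Φ₁ Ψ := by
        intro x hx
        induction hx using Relation.ReflTransGen.head_induction_on with
        | refl =>
          intro haK' hKb' Φ₁ hΦ₁ hCΦ₁ hKΦ₁
          exact (ih (insert K C) Φ₁ Ψ (hchainins K haK hKb)
            (Set.mem_insert_of_mem _ hbot) (Set.mem_insert_of_mem _ htop)
            hΦ₁ hΨ (Set.insert_subset hKΦ₁ hCΦ₁) (Set.insert_subset hKspec.1 hCΨ)
            (hcardins K haK hKb)).lift id
            (fun A B h => stepC_mono (Set.subset_insert _ _) h)
        | @head u v hr hrest ihP =>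
          obtain ⟨hau, hub, hav, hvb, hcmp⟩ := hr
          intro hau' hub' Φ₁ hΦ₁ hCΦ₁ huΦ₁
          -- chain C ∪ {u, v}
          have hchain2 : IsChain (· ≤ ·) (insert u (insert v C)) := by
            apply (hchainins v hav hvb).insert
            intro c hc _
            rcases hc with rfl | hc
            · exact hcmp
            · exact (hcomp u hau hub c hc).symm
          obtain ⟨Ω, hsubΩ, hΩ, _⟩ := hK.chain_flag _ hchain2
          have huΩ : u ∈ Ω := hsubΩ (Set.mem_insert _ _)
          have hvΩ : v ∈ Ω := hsubΩ (Set.mem_insert_of_mem _ (Set.mem_insert _ _))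
          have hCΩ : C ⊆ Ω := fun c hc =>
            hsubΩ (Set.mem_insert_of_mem _ (Set.mem_insert_of_mem _ hc))
          have path1 : Relation.ReflTransGen (StepC rk n C) Φ₁ Ω :=
            (ih (insert u C) Φ₁ Ω (hchainins u hau hub)
              (Set.mem_insert_of_mem _ hbot) (Set.mem_insert_of_mem _ htop)
              hΦ₁ hΩ (Set.insert_subset huΦ₁ hCΦ₁) (Set.insert_subset huΩ hCΩ)
              (hcardins u hau hub)).lift id
              (fun A B h => stepC_mono (Set.subset_insert _ _) h)
          exact path1.trans (ihP hav hvb Ω hΩ hCΩ hvΩ)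
      exact claim H hpath haH hHb Φ hΦ hCΦ hHspec.1
end Conn

section Final
variable {α : Type*} [PartialOrder α] [BoundedOrder α] {n : ℤ} {rk : α → ℤ}

/-- The stabilizer in `Γ` of the faces `F j`, `j ∉ K`. -/
def stabSub (Γ : Subgroup (α ≃o α)) (F : ℤ → α) (n : ℤ) (K : Set ℤ) :
    Subgroup (α ≃o α) where
  carrier := {g | g ∈ Γ ∧ ∀ j ∈ Set.Icc (-1 : ℤ) n, j ∉ K → g (F j) = F j}
  one_mem' := ⟨Γ.one_mem, fun j _ _ => rfl⟩
  mul_mem' := fun {a b} ha hb => ⟨Γ.mul_mem ha.1 hb.1, fun j hj hjK => by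
    show a (b (F j)) = F j
    rw [hb.2 j hj hjK, ha.2 j hj hjK]⟩
  inv_mem' := fun {a} ha => ⟨Γ.inv_mem ha.1, fun j hj hjK => by
    show a.symm (F j) = F j
    conv_lhs => rw [← ha.2 j hj hjK]
    exact a.symm_apply_apply _⟩

lemma gammaI_le_Gamma (Γ : Subgroup (α ≃o α)) (F : ℤ → α) (I : Set ℤ) :
    GammaI Γ F n I ≤ Γ := by
  apply Subgroup.closure_le Γ |>.mpr
  rintro r (hr | hr)
  · exact hr.1
  · simp only [Set.mem_iUnion] at hr
    obtain ⟨i, _, hr⟩ := hr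
    exact hr.1

lemma gammaI_le_stab (hK : IncComplex α n rk)
    (Γ : Subgroup (α ≃o α)) (F : ℤ → α)
    (hFrk : ∀ i ∈ Set.Icc (-1 : ℤ) n, rk (F i) = i) (I : Set ℤ) :
    GammaI Γ F n I ≤ stabSub Γ F n I := by
  apply Subgroup.closure_le (stabSub Γ F n I) |>.mpr
  rintro r (hr | hr)
  · refine ⟨hr.1, fun j hj hjI => ?_⟩
    rcases eq_or_ne j (-1) with rfl | hne
    · have hb : F (-1) = ⊥ := eq_bot_of_rk hK (hFrk (-1) (by simp [neg_one_le_n hK]))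
      rw [hb]
      exact r.map_bot
    · exact hr.2 j hj hne
  · simp only [Set.mem_iUnion] at hr
    obtain ⟨i, hiI, hr⟩ := hr
    exact ⟨hr.1, fun j hj hjI => hr.2 j hj (fun h => hjI (h ▸ hiI))⟩

/-- Transitivity of `Γ_I` on the flags containing `{F j : j ∉ I}`. -/
lemma gammaI_trans (hK : IncComplex α n rk)
    (Γ : Subgroup (α ≃o α)) (hΓ : FlagTrans Γ) (F : ℤ → α)
    (hFflag : IsFlagOf Set.univ (F '' Set.Icc (-1 : ℤ) n))
    (hFrk : ∀ i ∈ Set.Icc (-1 : ℤ) n, rk (F i) = i)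
    (I : Set ℤ) (Ψ : Set α) (hΨ : IsFlagOf Set.univ Ψ)
    (hsub : F '' (Set.Icc (-1 : ℤ) n \ I) ⊆ Ψ) :
    ∃ g ∈ GammaI Γ F n I, ⇑g '' (F '' Set.Icc (-1 : ℤ) n) = Ψ := by
  set Φ₀ : Set α := F '' Set.Icc (-1 : ℤ) n with hΦ₀def
  have hFe : ∀ j ∈ Set.Icc (-1:ℤ) n, F j = felem rk Φ₀ j := fun j hj =>
    felem_unique hK hFflag ⟨j, hj, rfl⟩ (hFrk j hj)
  set C : Set α := insert ⊥ (insert ⊤ (F '' (Set.Icc (-1 : ℤ) n \ I))) with hCdef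
  have hCΦ₀ : C ⊆ Φ₀ := by
    apply Set.insert_subset (bot_mem_flag hK hFflag)
    apply Set.insert_subset (top_mem_flag hK hFflag)
    exact Set.image_mono (Set.diff_subset)
  have hCΨ : C ⊆ Ψ := by
    apply Set.insert_subset (bot_mem_flag hK hΨ)
    exact Set.insert_subset (top_mem_flag hK hΨ) hsub
  have hCchain : IsChain (· ≤ ·) C := hFflag.2.1.mono hCΦ₀
  have hpath := conn hK ((n+2).toNat) C Φ₀ Ψ hCchain (Set.mem_insert _ _)
    (Set.mem_insert_of_mem _ (Set.mem_insert _ _)) hFflag hΨ hCΦ₀ hCΨ (by omega)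
  clear_value C
  clear hΨ hsub hCΨ
  -- walk along the path, building up the group element
  induction hpath with
  | refl => exact ⟨1, (GammaI Γ F n I).one_mem, by simp⟩
  | @tail A B hAB hstep ihg =>
    obtain ⟨g, hgmem, hgim⟩ := ihg
    obtain ⟨hA, hB, hCA, hCB, i, hi, hagree⟩ := hstep
    by_cases heq : felem rk A i = felem rk B i
    · have hABeq : A = B := flag_eq_of_felem hK hA hB (fun j hj => by
        rcases eq_or_ne j i with rfl | hne
        · exact heq
        · exact hagree j hj hne)
      exact ⟨g, hgmem, hABeq ▸ hgim⟩
    · have hiI : i ∈ I := by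
        by_contra hiI
        have hFiC : F i ∈ C := by
          rw [hCdef]
          exact Set.mem_insert_of_mem _ (Set.mem_insert_of_mem _ ⟨i, ⟨hi, hiI⟩, rfl⟩)
        have h1 : felem rk A i = F i := (felem_unique hK hA (hCA hFiC) (hFrk i hi)).symm
        have h2 : felem rk B i = F i := (felem_unique hK hB (hCB hFiC) (hFrk i hi)).symm
        exact heq (h1.trans h2.symm)
      have hB' : IsFlagOf Set.univ (⇑g⁻¹ '' B) := orderIso_image_flag hK g⁻¹ hB
      obtain ⟨r, hrΓ, hrim⟩ := hΓ Φ₀ (⇑g⁻¹ '' B) hFflag hB'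
      have hrfix : ∀ j ∈ Set.Icc (-1:ℤ) n, j ≠ i → r (F j) = F j := by
        intro j hj hne
        rw [hFe j hj]
        have e1 : r (felem rk Φ₀ j) = felem rk (⇑g⁻¹ '' B) j :=
          orderIso_felem hK r hFflag hB' hrim hj
        have e2 : g⁻¹ (felem rk B j) = felem rk (⇑g⁻¹ '' B) j :=
          orderIso_felem hK g⁻¹ hB hB' rfl hj
        have e3 : g (felem rk Φ₀ j) = felem rk A j :=
          orderIso_felem hK g hFflag hA hgim hj
        rw [e1, ← e2, ← hagree j hj hne, ← e3]
        exact g.symm_apply_apply _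
      have hrmem : r ∈ GammaI Γ F n I := by
        apply Subgroup.subset_closure
        right
        simp only [Set.mem_iUnion]
        exact ⟨i, hiI, hrΓ, hrfix⟩
      refine ⟨g * r, (GammaI Γ F n I).mul_mem hgmem hrmem, ?_⟩
      have hco : ⇑(g * r) = ⇑g ∘ ⇑r := rfl
      rw [hco, Set.image_comp, hrim, ← Set.image_comp]
      have : ⇑g ∘ ⇑g⁻¹ = id := funext fun x => g.apply_symm_apply x
      rw [this, Set.image_id]

/-- Any element of `Γ` fixing all `F j`, `j ∉ I`, lies in `Γ_I`. -/
lemma mem_gammaI (hK : IncComplex α n rk)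
    (Γ : Subgroup (α ≃o α)) (hΓ : FlagTrans Γ) (F : ℤ → α)
    (hFflag : IsFlagOf Set.univ (F '' Set.Icc (-1 : ℤ) n))
    (hFrk : ∀ i ∈ Set.Icc (-1 : ℤ) n, rk (F i) = i)
    (I : Set ℤ) {g : α ≃o α} (hgΓ : g ∈ Γ)
    (hfix : ∀ j ∈ Set.Icc (-1 : ℤ) n, j ∉ I → g (F j) = F j) :
    g ∈ GammaI Γ F n I := by
  set Φ₀ : Set α := F '' Set.Icc (-1 : ℤ) n with hΦ₀def
  have hΨ : IsFlagOf Set.univ (⇑g '' Φ₀) := orderIso_image_flag hK g hFflag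
  have hsub : F '' (Set.Icc (-1 : ℤ) n \ I) ⊆ ⇑g '' Φ₀ := by
    rintro x ⟨j, ⟨hj, hjI⟩, rfl⟩
    exact ⟨F j, ⟨j, hj, rfl⟩, hfix j hj hjI⟩
  obtain ⟨h, hhmem, hhim⟩ := gammaI_trans hK Γ hΓ F hFflag hFrk I (⇑g '' Φ₀) hΨ hsub
  set q := h⁻¹ * g with hq
  have hqim : ⇑q '' Φ₀ = Φ₀ := by
    have hco : ⇑q = ⇑h⁻¹ ∘ ⇑g := rfl
    rw [hco, Set.image_comp, ← hhim, ← Set.image_comp]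
    have : ⇑h⁻¹ ∘ ⇑h = id := funext fun x => h.symm_apply_apply x
    rw [this, Set.image_id]
  have hqΓ : q ∈ Γ := Γ.mul_mem (Γ.inv_mem (gammaI_le_Gamma Γ F I hhmem)) hgΓ
  have hqfix : ∀ j ∈ Set.Icc (-1:ℤ) n, j ≠ (-1:ℤ) → q (F j) = F j := by
    intro j hj _
    have hFe : F j = felem rk Φ₀ j :=
      felem_unique hK hFflag ⟨j, hj, rfl⟩ (hFrk j hj)
    rw [hFe]
    exact orderIso_felem hK q hFflag hFflag hqim hj
  have hqmem : q ∈ GammaI Γ F n I :=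
    Subgroup.subset_closure (Or.inl ⟨hqΓ, hqfix⟩)
  have : g = h * q := by rw [hq]; group
  rw [this]
  exact (GammaI Γ F n I).mul_mem hhmem hqmem

end Final


/-- the intersection property for the distinguished subgroups of a
flag-transitive subgroup of a regular incidence complex. -/
theorem intersection_property
    {α : Type*} [PartialOrder α] [BoundedOrder α] (n : ℤ) (rk : α → ℤ)
    (hn : 1 ≤ n) (hK : IncComplex α n rk)
    (Γ : Subgroup (α ≃o α)) (hΓ : FlagTrans Γ)
    (F : ℤ → α) (hFflag : IsFlagOf Set.univ (F '' Set.Icc (-1 : ℤ) n))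
    (hFrk : ∀ i ∈ Set.Icc (-1 : ℤ) n, rk (F i) = i)
    (I J : Set ℤ) (hI : I ⊆ Set.Icc (-1 : ℤ) n) (hJ : J ⊆ Set.Icc (-1 : ℤ) n) :
    GammaI Γ F n I ⊓ GammaI Γ F n J = GammaI Γ F n (I ∩ J) := by
  have mem_stab : ∀ (K : Set ℤ) (g : α ≃o α), g ∈ stabSub Γ F n K ↔
      g ∈ Γ ∧ ∀ j ∈ Set.Icc (-1 : ℤ) n, j ∉ K → g (F j) = F j := fun _ _ => Iff.rfl
  apply le_antisymm
  · intro g hg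
    obtain ⟨hgI, hgJ⟩ := Subgroup.mem_inf.mp hg
    have hgΓ : g ∈ Γ := gammaI_le_Gamma Γ F I hgI
    apply mem_gammaI hK Γ hΓ F hFflag hFrk (I ∩ J) hgΓ
    intro j hj hjIJ
    by_cases hjI : j ∈ I
    · have hjJ : j ∉ J := fun h => hjIJ ⟨hjI, h⟩
      exact ((mem_stab J g).mp (gammaI_le_stab hK Γ F hFrk J hgJ)).2 j hj hjJ
    · exact ((mem_stab I g).mp (gammaI_le_stab hK Γ F hFrk I hgI)).2 j hj hjI
  · apply le_inf
    · apply Subgroup.closure_mono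
      apply Set.union_subset_union_right
      exact Set.biUnion_subset_biUnion_left Set.inter_subset_left
    · apply Subgroup.closure_mono
      apply Set.union_subset_union_right
      exact Set.biUnion_subset_biUnion_left Set.inter_subset_right
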